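/- Consider the one-dimensional continuum Schelling equation for $M=2$ on the torus $\mathcal S$ of width $R$ with $3R/4=n\in\mathbb{N}$, written in the form $\partial_t \hat Y(x,t)=\int_{x-1}^{x+1}\operatorname{sign}\hat Y(x',t)\,dx'$. Define periodic initial data $\hat Y(x,0)=-1+3(x-4k/3)$ for $x\in\frac23[2k,2k+1)$ and $\hat Y(x,0)=1-3(x-4k/3-2/3)$ for $x\in\frac23[2k+1,2k+2)$, for $k\in\{0,\dots,n-1\}$. Then for all $t\in[0,3/2)$, $\partial_t\hat Y(x,t)=2/3-2(x-4k/3)$ for $x\in\frac23[2k,2k+1)$ and $\partial_t\hat Y(x,t)=-2/3+2(x-4k/3-2/3)$ for $x\in\frac23[2k+1,2k+2)$, and $\hat Y(\cdot,3/2)\equiv 0$. Consequently, for this initial data, solutions for $t\ge 3/2$ are not unique: both $\hat Y(x,t)=2(t-3/2)$ and $\hat Y(x,t)=-2(t-3/2)$ solve the equation for $t\ge 3/2$ (allowing the time derivative to fail at $t=3/2$). -/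

import Mathlib

open Set MeasureTheory




noncomputable def pp (x : ℝ) : ℝ := 4/3 * Int.fract (3 * x / 4)

noncomputable def gg (x : ℝ) : ℝ := if pp x < 2/3 then pp x - 1/3 else 1 - pp x

lemma pp_nonneg (x : ℝ) : 0 ≤ pp x := by
  have := Int.fract_nonneg (3 * x / 4); unfold pp; nlinarith

lemma pp_lt (x : ℝ) : pp x < 4/3 := by
  have := Int.fract_lt_one (3 * x / 4); unfold pp; nlinarith

lemma pp_int (x : ℝ) (k : ℤ) : pp (x + 4/3 * k) = pp x := by
  unfold pp
  have : 3 * (x + 4/3 * k) / 4 = 3 * x / 4 + k := by ring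
  rw [this, Int.fract_add_intCast]

lemma pp_eq_self {x : ℝ} (h0 : 0 ≤ x) (h1 : x < 4/3) : pp x = x := by
  unfold pp
  rw [Int.fract_eq_self.2 ⟨by linarith, by linarith⟩]
  ring

lemma pp_eq (x : ℝ) (k : ℤ) (h0 : 4/3 * k ≤ x) (h1 : x < 4/3 * k + 4/3) :
    pp x = x - 4/3 * k := by
  have : x = (x - 4/3*k) + 4/3 * k := by ring
  conv_lhs => rw [this, pp_int, pp_eq_self (by linarith) (by linarith)]

lemma gg_int (x : ℝ) (k : ℤ) : gg (x + 4/3 * k) = gg x := by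
  unfold gg; rw [pp_int]

lemma gg_formula1 (x : ℝ) (k : ℤ) (h0 : 4/3 * k ≤ x) (h1 : x < 4/3 * k + 2/3) :
    gg x = x - 4/3 * k - 1/3 := by
  have hp : pp x = x - 4/3 * k := pp_eq x k h0 (by linarith)
  unfold gg; rw [hp, if_pos (by linarith)]

lemma gg_formula2 (x : ℝ) (k : ℤ) (h0 : 4/3 * k + 2/3 ≤ x) (h1 : x < 4/3 * k + 4/3) :
    gg x = 1 - (x - 4/3 * k) := by
  have hp : pp x = x - 4/3 * k := pp_eq x k (by linarith) h1
  unfold gg; rw [hp, if_neg (by push_neg; linarith)]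

lemma gg_abs_le (x : ℝ) : |gg x| ≤ 1/3 := by
  have h0 := pp_nonneg x; have h1 := pp_lt x
  unfold gg; split <;> rw [abs_le] <;> constructor <;> linarith

lemma measurable_pp : Measurable pp :=
  (measurable_fract.comp (measurable_id.const_mul (3:ℝ) |>.div_const 4)).const_mul _

lemma measurable_gg : Measurable gg :=
  Measurable.ite (measurableSet_lt measurable_pp measurable_const)
    (measurable_pp.sub measurable_const) (measurable_const.sub measurable_pp)

lemma measurable_sign : Measurable (Real.sign : ℝ → ℝ) := by
  have : (Real.sign : ℝ → ℝ) = fun r => if r < 0 then -1 else if 0 < r then 1 else 0 := by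
    funext r; rw [Real.sign]
  rw [this]
  exact Measurable.ite (measurableSet_lt measurable_id measurable_const)
    measurable_const (Measurable.ite (measurableSet_lt measurable_const measurable_id)
      measurable_const measurable_const)

lemma gg_pos {x : ℝ} (h0 : 1/3 < pp x) (h1 : pp x < 1) : 0 < gg x := by
  unfold gg; split <;> linarith

lemma gg_neg1 {x : ℝ} (h : pp x < 1/3) : gg x < 0 := by
  unfold gg; rw [if_pos (by linarith)]; linarith

lemma gg_neg2 {x : ℝ} (h : 1 < pp x) : gg x < 0 := by
  have := pp_lt x
  unfold gg; rw [if_neg (by push_neg; linarith)]; linarith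

lemma gg_zero_iff (x : ℝ) : gg x = 0 ↔ pp x = 1/3 ∨ pp x = 1 := by
  unfold gg
  split <;> constructor <;> intro h
  · left; linarith
  · rcases h with h | h; linarith; linarith [‹pp x < 2/3›]
  · right; linarith
  · rcases h with h | h
    · exfalso; push_neg at *; linarith [‹2/3 ≤ pp x›]
    · linarith


noncomputable def SS : ℝ → ℝ := fun y => Real.sign (gg y)

lemma sign_abs_le (x : ℝ) : |Real.sign x| ≤ 1 := by
  rcases lt_trichotomy x 0 with h | h | h
  · rw [Real.sign_of_neg h]; norm_num
  · rw [h, Real.sign_zero]; norm_num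
  · rw [Real.sign_of_pos h]; norm_num

lemma SS_integrableOn (s : Set ℝ) (hs : volume s ≠ ⊤) :
    IntegrableOn (SS) s volume := by
  have hm : Measurable (SS) := by
    have : Measurable (Real.sign : ℝ → ℝ) := by
      have : (Real.sign : ℝ → ℝ) = fun r => if r < 0 then -1 else if 0 < r then 1 else 0 := by
        funext r; rw [Real.sign]
      rw [this]
      exact Measurable.ite (measurableSet_lt measurable_id measurable_const)
        measurable_const (Measurable.ite (measurableSet_lt measurable_const measurable_id)
          measurable_const measurable_const)
    exact this.comp measurable_gg
  haveI : IsFiniteMeasure (volume.restrict s) := ⟨by simpa [lt_top_iff_ne_top] using hs⟩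
  refine ⟨hm.aestronglyMeasurable.restrict, ?_⟩
  apply MeasureTheory.HasFiniteIntegral.of_bounded (C := 1)
  exact ae_of_all _ fun y => by simpa [SS] using sign_abs_le (gg y)

lemma SS_intervalIntegrable (a b : ℝ) :
    IntervalIntegrable (SS) volume a b :=
  ⟨SS_integrableOn _ (by simp), SS_integrableOn _ (by simp)⟩

lemma piece (a b : ℝ) (hab : a ≤ b) (v : ℝ) (hv : ∀ y ∈ Ioo a b, SS y = v) :
    ∫ y in a..b, SS y = v * (b - a) := by
  rw [intervalIntegral.integral_of_le hab, MeasureTheory.integral_Ioc_eq_integral_Ioo,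
    MeasureTheory.setIntegral_congr_fun measurableSet_Ioo hv, MeasureTheory.setIntegral_const,
    measureReal_def, Real.volume_Ioo, ENNReal.toReal_ofReal (by linarith), smul_eq_mul, mul_comm]

lemma intS_shift (a b : ℝ) (k : ℤ) :
    (∫ y in (a + 4/3*k)..(b + 4/3*k), SS y) = ∫ y in a..b, SS y := by
  have h : ∀ y : ℝ, SS (y + 4/3*k) = SS y := fun y => by
    unfold SS; rw [gg_int]
  rw [← intervalIntegral.integral_comp_add_right (fun y => SS y) (4/3*k)]
  simp only [h]

-- sign value lemmas
lemma S_neg {y : ℝ} (h : pp y < 1/3 ∨ 1 < pp y) : SS y = -1 := by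
  unfold SS
  rcases h with h | h
  · exact Real.sign_of_neg (gg_neg1 h)
  · exact Real.sign_of_neg (gg_neg2 h)

lemma S_pos {y : ℝ} (h0 : 1/3 < pp y) (h1 : pp y < 1) : SS y = 1 :=
  Real.sign_of_pos (gg_pos h0 h1)

lemma intB (x : ℝ) : (∫ y in Ioo (x-1) (x+1), Real.sign (gg y)) = -2 * gg x := by
  -- reduce to u = pp x
  set k := ⌊3 * x / 4⌋ with hk
  have hx : x = pp x + 4/3 * k := by
    unfold pp Int.fract; push_cast; ring
  have hIoo : (∫ y in Ioo (x-1) (x+1), Real.sign (gg y)) = ∫ y in (x-1)..(x+1), SS y := by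
    rw [intervalIntegral.integral_of_le (by linarith), MeasureTheory.integral_Ioc_eq_integral_Ioo]
    rfl
  have hshift : (∫ y in (x-1)..(x+1), SS y) = ∫ y in (pp x - 1)..(pp x + 1), SS y := by
    have e1 : x - 1 = (pp x - 1) + 4/3*(k:ℝ) := by linarith [hx]
    have e2 : x + 1 = (pp x + 1) + 4/3*(k:ℝ) := by linarith [hx]
    rw [e1, e2, intS_shift]
  have hggx : gg x = gg (pp x) := by
    conv_lhs => rw [hx, gg_int]
  set u := pp x with hu
  have hu0 : 0 ≤ u := pp_nonneg x
  have hu1 : u < 4/3 := pp_lt x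
  rw [hIoo, hshift, hggx]
  -- pp of values in [0, 4/3) is itself
  have ppid : ∀ y : ℝ, 0 ≤ y → y < 4/3 → pp y = y := fun y h1 h2 => pp_eq_self h1 h2
  have ppneg : ∀ y : ℝ, -4/3 ≤ y → y < 0 → pp y = y + 4/3 := by
    intro y h1 h2
    have := pp_eq y (-1) (by push_cast; linarith) (by push_cast; linarith)
    push_cast at this; linarith
  have pphigh : ∀ y : ℝ, 4/3 ≤ y → y < 8/3 → pp y = y - 4/3 := by
    intro y h1 h2
    have := pp_eq y 1 (by push_cast; linarith) (by push_cast; linarith)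
    push_cast at this; linarith
  rcases lt_or_ge u (2/3) with hcase | hcase
  · -- u ∈ [0, 2/3), g u = u - 1/3, answer 2/3 - 2u
    have hgu : gg u = u - 1/3 := by
      have := gg_formula1 u 0 (by push_cast; linarith) (by push_cast; linarith)
      push_cast at this; linarith
    have p1 : (∫ y in (u-1)..(-1/3 : ℝ), SS y) = 1 * (-1/3 - (u-1)) := by
      apply piece _ _ (by linarith)
      intro y hy
      obtain ⟨hy1, hy2⟩ := hy
      have hpy : pp y = y + 4/3 := ppneg y (by linarith) (by linarith)
      exact S_pos (by rw [hpy]; linarith) (by rw [hpy]; linarith)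
    have p2 : (∫ y in (-1/3 : ℝ)..(1/3 : ℝ), SS y) = -1 * (1/3 - (-1/3)) := by
      apply piece _ _ (by norm_num)
      intro y hy
      obtain ⟨hy1, hy2⟩ := hy
      rcases lt_or_ge y 0 with h | h
      · exact S_neg (Or.inr (by rw [ppneg y (by linarith) h]; linarith))
      · exact S_neg (Or.inl (by rw [ppid y h (by linarith)]; linarith))
    have p3 : (∫ y in (1/3 : ℝ)..(1 : ℝ), SS y) = 1 * (1 - 1/3) := by
      apply piece _ _ (by norm_num)
      intro y hy
      obtain ⟨hy1, hy2⟩ := hy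
      exact S_pos (by rw [ppid y (by linarith) (by linarith)]; linarith)
        (by rw [ppid y (by linarith) (by linarith)]; linarith)
    have p4 : (∫ y in (1 : ℝ)..(u+1), SS y) = -1 * ((u+1) - 1) := by
      apply piece _ _ (by linarith)
      intro y hy
      obtain ⟨hy1, hy2⟩ := hy
      rcases lt_or_ge y (4/3) with h | h
      · exact S_neg (Or.inr (by rw [ppid y (by linarith) h]; linarith))
      · exact S_neg (Or.inl (by rw [pphigh y h (by linarith)]; linarith))
    have a1 := intervalIntegral.integral_add_adjacent_intervals
      (SS_intervalIntegrable (u-1) (-1/3)) (SS_intervalIntegrable (-1/3) (1/3))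
    have a2 := intervalIntegral.integral_add_adjacent_intervals
      (SS_intervalIntegrable (u-1) (1/3)) (SS_intervalIntegrable (1/3) 1)
    have a3 := intervalIntegral.integral_add_adjacent_intervals
      (SS_intervalIntegrable (u-1) 1) (SS_intervalIntegrable 1 (u+1))
    rw [hgu]
    rw [← a3, ← a2, ← a1, p1, p2, p3, p4]
    ring
  · -- u ∈ [2/3, 4/3), g u = 1 - u, answer 2u - 2
    have hgu : gg u = 1 - u := by
      have := gg_formula2 u 0 (by push_cast; linarith) (by push_cast; linarith)
      push_cast at this; linarith
    have p1 : (∫ y in (u-1)..(1/3 : ℝ), SS y) = -1 * (1/3 - (u-1)) := by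
      apply piece _ _ (by linarith)
      intro y hy
      obtain ⟨hy1, hy2⟩ := hy
      rcases lt_or_ge y 0 with h | h
      · exact S_neg (Or.inr (by rw [ppneg y (by linarith) h]; linarith))
      · exact S_neg (Or.inl (by rw [ppid y h (by linarith)]; linarith))
    have p2 : (∫ y in (1/3 : ℝ)..(1 : ℝ), SS y) = 1 * (1 - 1/3) := by
      apply piece _ _ (by norm_num)
      intro y hy
      obtain ⟨hy1, hy2⟩ := hy
      exact S_pos (by rw [ppid y (by linarith) (by linarith)]; linarith)
        (by rw [ppid y (by linarith) (by linarith)]; linarith)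
    have p3 : (∫ y in (1 : ℝ)..(5/3 : ℝ), SS y) = -1 * (5/3 - 1) := by
      apply piece _ _ (by norm_num)
      intro y hy
      obtain ⟨hy1, hy2⟩ := hy
      rcases lt_or_ge y (4/3) with h | h
      · exact S_neg (Or.inr (by rw [ppid y (by linarith) h]; linarith))
      · exact S_neg (Or.inl (by rw [pphigh y h (by linarith)]; linarith))
    have p4 : (∫ y in (5/3 : ℝ)..(u+1), SS y) = 1 * ((u+1) - 5/3) := by
      apply piece _ _ (by linarith)
      intro y hy
      obtain ⟨hy1, hy2⟩ := hy
      have hpy : pp y = y - 4/3 := pphigh y (by linarith) (by linarith)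
      exact S_pos (by rw [hpy]; linarith) (by rw [hpy]; linarith)
    have a1 := intervalIntegral.integral_add_adjacent_intervals
      (SS_intervalIntegrable (u-1) (1/3)) (SS_intervalIntegrable (1/3) 1)
    have a2 := intervalIntegral.integral_add_adjacent_intervals
      (SS_intervalIntegrable (u-1) 1) (SS_intervalIntegrable 1 (5/3))
    have a3 := intervalIntegral.integral_add_adjacent_intervals
      (SS_intervalIntegrable (u-1) (5/3)) (SS_intervalIntegrable (5/3) (u+1))
    rw [hgu]
    rw [← a3, ← a2, ← a1, p1, p2, p3, p4]
    ring

lemma zg_null : volume {y : ℝ | gg y = 0} = 0 := by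
  have hsub : {y : ℝ | gg y = 0} ⊆
      (Set.range (fun j : ℤ => 1/3 + 4/3*(j:ℝ))) ∪ (Set.range (fun j : ℤ => 1 + 4/3*(j:ℝ))) := by
    intro y hy
    have h := (gg_zero_iff y).1 hy
    have hy' : y = pp y + 4/3*(⌊3*y/4⌋:ℝ) := by unfold pp Int.fract; push_cast; ring
    rcases h with h | h
    · exact Or.inl ⟨⌊3*y/4⌋, by conv_rhs => rw [hy', h]⟩
    · exact Or.inr ⟨⌊3*y/4⌋, by conv_rhs => rw [hy', h]⟩
  exact measure_mono_null hsub (measure_union_null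
    ((Set.countable_range _).measure_zero _) ((Set.countable_range _).measure_zero _))

lemma trans_measure (s : Set ℝ) (c : ℝ) : volume ((fun z => z + c) '' s) = volume s := by
  rw [Set.image_add_right, measure_preimage_add_right]

lemma shift_mem (s : Set ℝ) (R : ℝ) (hper : ∀ y : ℝ, y ∈ s ↔ y + R ∈ s) :
    ∀ (j : ℤ) (y : ℝ), y + R*j ∈ s ↔ y ∈ s := by
  intro j
  induction j using Int.induction_on with
  | zero => intro y; norm_num
  | succ i ih =>
    intro y
    have e : y + R*((i:ℤ)+1:ℤ) = (y + R*(i:ℤ)) + R := by push_cast; ring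
    rw [e, ← hper (y + R*(i:ℤ))]
    exact ih y
  | pred i ih =>
    intro y
    have e : (y + R*(-(i:ℤ)-1:ℤ)) + R = y + R*(-(i:ℤ):ℤ) := by push_cast; ring
    have h2 := hper (y + R*(-(i:ℤ)-1:ℤ))
    rw [e] at h2
    rw [h2]
    exact ih y

lemma null_of_periodic (s : Set ℝ) (R : ℝ) (hR : 0 < R)
    (hper : ∀ y : ℝ, y ∈ s ↔ y + R ∈ s) (h0 : volume (s ∩ Ico 0 R) = 0) :
    volume s = 0 := by
  have hsub : s ⊆ ⋃ j : ℤ, (fun z => z + R*(j:ℝ)) '' (s ∩ Ico 0 R) := by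
    intro y hy
    refine mem_iUnion.2 ⟨⌊y/R⌋, ?_⟩
    have h1 : (⌊y/R⌋:ℝ) * R ≤ y := (le_div_iff₀ hR).1 (Int.floor_le (y/R))
    have h2 : y < ((⌊y/R⌋:ℝ)+1) * R := (div_lt_iff₀ hR).1 (Int.lt_floor_add_one (y/R))
    refine ⟨y - R*(⌊y/R⌋:ℝ), ⟨?_, ?_, ?_⟩, by ring⟩
    · have := (shift_mem s R hper ⌊y/R⌋ (y - R*(⌊y/R⌋:ℝ)))
      rw [show y - R*(⌊y/R⌋:ℝ) + R*(⌊y/R⌋:ℝ) = y by ring] at this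
      exact this.1 hy
    · nlinarith
    · nlinarith
  refine measure_mono_null hsub (measure_iUnion_null fun j => ?_)
  rw [trans_measure]
  exact h0

lemma slab (s : Set ℝ) (R : ℝ) (hper : ∀ y : ℝ, y ∈ s ↔ y + R ∈ s) (c : ℤ) :
    volume (s ∩ Ico (R*c) (R*c+R)) = volume (s ∩ Ico 0 R) := by
  have he : s ∩ Ico (R*(c:ℝ)) (R*c+R) = (fun z => z + R*(c:ℝ)) '' (s ∩ Ico 0 R) := by
    ext z
    simp only [mem_image, mem_inter_iff, mem_Ico]
    constructor
    · rintro ⟨hz, h1, h2⟩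
      refine ⟨z - R*(c:ℝ), ⟨?_, by constructor <;> linarith⟩, by ring⟩
      have := shift_mem s R hper c (z - R*(c:ℝ))
      rw [show z - R*(c:ℝ) + R*(c:ℝ) = z by ring] at this
      exact this.1 hz
    · rintro ⟨w, ⟨hw, h1, h2⟩, rfl⟩
      exact ⟨(shift_mem s R hper c w).2 hw, by constructor <;> linarith⟩
  rw [he, trans_measure]

lemma cover3 (s : Set ℝ) (R a : ℝ) (hR : 1 ≤ R)
    (hper : ∀ y : ℝ, y ∈ s ↔ y + R ∈ s) :
    volume (s ∩ Ioo a (a+2)) ≤ 3 * volume (s ∩ Ico 0 R) := by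
  have hR0 : 0 < R := by linarith
  set j := ⌊a/R⌋ with hj
  have hj1 : (j:ℝ) * R ≤ a := (le_div_iff₀ hR0).1 (Int.floor_le (a/R))
  have hj2 : a < ((j:ℝ)+1) * R := (div_lt_iff₀ hR0).1 (Int.lt_floor_add_one (a/R))
  have hsub : s ∩ Ioo a (a+2) ⊆
      ⋃ i ∈ Finset.range 3, s ∩ Ico (R*((j:ℝ)+(i:ℕ))) (R*((j:ℝ)+(i:ℕ))+R) := by
    rintro z ⟨hz, hz1, hz2⟩
    have hz3 : R*(j:ℝ) ≤ z := by nlinarith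
    have hz4 : z < R*(j:ℝ) + 3*R := by nlinarith
    rcases lt_or_ge z (R*(j:ℝ)+R) with h | h
    · refine mem_biUnion (Finset.mem_range.2 (by norm_num : (0:ℕ) < 3)) ⟨hz, ?_, ?_⟩
      · push_cast; linarith
      · push_cast; linarith
    rcases lt_or_ge z (R*(j:ℝ)+2*R) with h' | h'
    · refine mem_biUnion (Finset.mem_range.2 (by norm_num : (1:ℕ) < 3)) ⟨hz, ?_, ?_⟩
      · push_cast; linarith
      · push_cast; linarith
    · refine mem_biUnion (Finset.mem_range.2 (by norm_num : (2:ℕ) < 3)) ⟨hz, ?_, ?_⟩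
      · push_cast; linarith
      · push_cast; linarith
  refine le_trans (measure_mono hsub) (le_trans (measure_biUnion_finset_le _ _) ?_)
  have he : ∀ i ∈ Finset.range 3,
      volume (s ∩ Ico (R*((j:ℝ)+(i:ℕ))) (R*((j:ℝ)+(i:ℕ))+R)) = volume (s ∩ Ico 0 R) := by
    intro i _
    have : (R*((j:ℝ)+(i:ℕ))) = R*((j+(i:ℕ) : ℤ):ℝ) := by push_cast; ring
    rw [this, slab s R hper (j+(i:ℕ))]
  rw [Finset.sum_congr rfl he, Finset.sum_const, Finset.card_range]
  simp [mul_comm]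

lemma gg_small_loc (R : ℝ) (n : ℕ) (hRn : R = 4/3*n) {x ρ : ℝ}
    (h0 : 0 ≤ x) (h1 : x < R) (hρ : |gg x| ≤ ρ) :
    ∃ j : ℕ, j < 2*n ∧ x ∈ Icc (1/3 + 2*(j:ℝ)/3 - ρ) (1/3 + 2*(j:ℝ)/3 + ρ) := by
  set k' := ⌊3*x/4⌋ with hk'
  have hk0 : 0 ≤ k' := Int.floor_nonneg.2 (by linarith)
  have hkn : k' < (n:ℤ) := by
    apply Int.floor_lt.2
    push_cast
    rw [hRn] at h1
    linarith
  have hf1 : (k':ℝ) ≤ 3*x/4 := Int.floor_le _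
  have hf2 : 3*x/4 < k' + 1 := Int.lt_floor_add_one _
  have habs := abs_le.1 hρ
  have hcast : ((k'.toNat : ℕ):ℝ) = (k':ℝ) := by exact_mod_cast Int.toNat_of_nonneg hk0
  rcases lt_or_ge x (4/3*(k':ℝ) + 2/3) with hbr | hbr
  · have hg := gg_formula1 x k' (by linarith) hbr
    have hc2 : ((2*k'.toNat : ℕ):ℝ) = 2*(k':ℝ) := by push_cast; rw [hcast]
    refine ⟨2*k'.toNat, by omega, ?_, ?_⟩
    · rw [hc2]; rw [hg] at habs; linarith [habs.1]
    · rw [hc2]; rw [hg] at habs; linarith [habs.2]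
  · have hg := gg_formula2 x k' (by linarith) (by linarith)
    have hc2 : ((2*k'.toNat+1 : ℕ):ℝ) = 2*(k':ℝ)+1 := by push_cast; rw [hcast]
    refine ⟨2*k'.toNat+1, by omega, ?_, ?_⟩
    · rw [hc2]; rw [hg] at habs; linarith [habs.2]
    · rw [hc2]; rw [hg] at habs; linarith [habs.1]

lemma gg_br1 (k : ℕ) (x : ℝ) (h1 : 2*(2*(k:ℝ))/3 ≤ x) (h2 : x < 2*(2*(k:ℝ)+1)/3) :
    gg x = x - 4*(k:ℝ)/3 - 1/3 := by
  have := gg_formula1 x (k:ℤ) (by push_cast; linarith) (by push_cast; linarith)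
  push_cast at this; linarith

lemma gg_br2 (k : ℕ) (x : ℝ) (h1 : 2*(2*(k:ℝ)+1)/3 ≤ x) (h2 : x < 2*(2*(k:ℝ)+2)/3) :
    gg x = 1 - (x - 4*(k:ℝ)/3) := by
  have := gg_formula2 x (k:ℤ) (by push_cast; linarith) (by push_cast; linarith)
  push_cast at this; linarith

/-- The deviation set at time `u`. -/
def DD (Y : ℝ → ℝ → ℝ) (u : ℝ) : Set ℝ :=
  {y | gg y ≠ 0 ∧ Real.sign (Y y u) ≠ Real.sign (gg y)}

set_option maxHeartbeats 2000000 in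
/-- Non-uniqueness example for the one-dimensional `M = 2` continuum Schelling equation
`∂ₜ Ŷ(x,t) = ∫_{x-1}^{x+1} sign Ŷ(x',t) dx'` on the torus of width `R` with `3R/4 = n ∈ ℕ`:
with the given periodic sawtooth initial data, for `t ∈ [0, 3/2)` the time derivative is as
given piecewise, `Ŷ(·,3/2) ≡ 0`, and both `±2(t - 3/2)` solve the equation for `t > 3/2`. -/
theorem stmt3 (R : ℝ) (n : ℕ) (hn : 3 * R / 4 = (n : ℝ)) (hn1 : 1 ≤ n)
    (Y : ℝ → ℝ → ℝ)
    (hper : ∀ x t : ℝ, Y (x + R) t = Y x t)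
    (hcont : ∀ x : ℝ, Continuous (Y x))
    (hinit1 : ∀ k : ℕ, k < n → ∀ x : ℝ,
      2 * (2 * (k : ℝ)) / 3 ≤ x → x < 2 * (2 * (k : ℝ) + 1) / 3 →
      Y x 0 = -1 + 3 * (x - 4 * (k : ℝ) / 3))
    (hinit2 : ∀ k : ℕ, k < n → ∀ x : ℝ,
      2 * (2 * (k : ℝ) + 1) / 3 ≤ x → x < 2 * (2 * (k : ℝ) + 2) / 3 →
      Y x 0 = 1 - 3 * (x - 4 * (k : ℝ) / 3 - 2 / 3))
    (hPDE : ∀ x : ℝ, ∀ t ∈ Set.Ico (0 : ℝ) (3 / 2),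
      HasDerivAt (fun s => Y x s)
        (∫ x' in Set.Ioo (x - 1) (x + 1), Real.sign (Y x' t)) t) :
    (∀ k : ℕ, k < n → ∀ x : ℝ,
      2 * (2 * (k : ℝ)) / 3 ≤ x → x < 2 * (2 * (k : ℝ) + 1) / 3 →
      ∀ t ∈ Set.Ico (0 : ℝ) (3 / 2),
        HasDerivAt (fun s => Y x s) (2 / 3 - 2 * (x - 4 * (k : ℝ) / 3)) t) ∧
    (∀ k : ℕ, k < n → ∀ x : ℝ,
      2 * (2 * (k : ℝ) + 1) / 3 ≤ x → x < 2 * (2 * (k : ℝ) + 2) / 3 →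
      ∀ t ∈ Set.Ico (0 : ℝ) (3 / 2),
        HasDerivAt (fun s => Y x s) (-2 / 3 + 2 * (x - 4 * (k : ℝ) / 3 - 2 / 3)) t) ∧
    (∀ x : ℝ, Y x (3 / 2) = 0) ∧
    (∀ σ : ℝ, σ = 1 ∨ σ = -1 →
      ∀ x : ℝ, ∀ t : ℝ, 3 / 2 < t →
        HasDerivAt (fun s : ℝ => σ * (2 * (s - 3 / 2)))
          (∫ x' in Set.Ioo (x - 1) (x + 1),
            Real.sign (σ * (2 * (t - 3 / 2)))) t) := by
  -- basic facts about R
  have hRn : R = 4/3*(n:ℝ) := by linarith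
  have hn1' : (1:ℝ) ≤ (n:ℝ) := by exact_mod_cast hn1
  have hR1 : (1:ℝ) ≤ R := by rw [hRn]; linarith
  have hRpos : (0:ℝ) < R := by linarith
  -- periodicity of gg with period R
  have hgR : ∀ y : ℝ, gg (y + R) = gg y := by
    intro y
    have : y + R = y + 4/3*((n:ℤ):ℝ) := by rw [hRn]; push_cast; ring
    rw [this, gg_int]
  -- Y at time 0
  have hY0 : ∀ x : ℝ, Y x 0 = 3 * gg x := by
    intro x
    set j := ⌊x / R⌋ with hj
    have h1 : (j:ℝ) * R ≤ x := (le_div_iff₀ hRpos).1 (Int.floor_le (x/R))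
    have h2 : x < ((j:ℝ)+1) * R := (div_lt_iff₀ hRpos).1 (Int.lt_floor_add_one (x/R))
    obtain ⟨x₀, hx₀⟩ : ∃ x₀ : ℝ, x₀ = x - R*(j:ℝ) := ⟨_, rfl⟩
    have hx₀0 : 0 ≤ x₀ := by rw [hx₀]; nlinarith
    have hx₀R : x₀ < R := by rw [hx₀]; nlinarith
    have hYx : Y x 0 = Y x₀ 0 := by
      have hp : Function.Periodic (fun y => Y y 0) R := fun y => hper y 0
      have := (hp.int_mul j) x₀
      rw [show x₀ + (j:ℝ)*R = x by rw [hx₀]; ring] at this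
      exact this
    have hgx : gg x = gg x₀ := by
      have hp : Function.Periodic gg R := hgR
      have := (hp.int_mul j) x₀
      rw [show x₀ + (j:ℝ)*R = x by rw [hx₀]; ring] at this
      exact this
    rw [hYx, hgx]
    -- branch analysis on x₀ ∈ [0, R)
    set k' := ⌊3*x₀/4⌋ with hk'
    have hk0 : 0 ≤ k' := Int.floor_nonneg.2 (by linarith)
    have hkn : k' < (n:ℤ) := by
      apply Int.floor_lt.2; push_cast; rw [hRn] at hx₀R; linarith
    have hf1 : (k':ℝ) ≤ 3*x₀/4 := Int.floor_le _
    have hf2 : 3*x₀/4 < k' + 1 := Int.lt_floor_add_one _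
    have hcast : ((k'.toNat : ℕ):ℝ) = (k':ℝ) := by exact_mod_cast Int.toNat_of_nonneg hk0
    have hknn : k'.toNat < n := by omega
    rcases lt_or_ge x₀ (4/3*(k':ℝ) + 2/3) with hbr | hbr
    · have hi := hinit1 k'.toNat hknn x₀ (by rw [hcast]; linarith) (by rw [hcast]; linarith)
      have hg := gg_formula1 x₀ k' (by linarith) hbr
      rw [hi, hg, hcast]; ring
    · have hi := hinit2 k'.toNat hknn x₀ (by rw [hcast]; linarith) (by rw [hcast]; linarith)
      have hg := gg_formula2 x₀ k' (by linarith) (by linarith)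
      rw [hi, hg, hcast]; ring
  -- periodicity of the deviation set
  have hDper : ∀ u : ℝ, ∀ y : ℝ, y ∈ DD Y u ↔ y + R ∈ DD Y u := by
    intro u y
    simp only [DD, mem_setOf_eq, hgR, hper]
  -- the deviation set is small-null implies the integral identity
  have hFEQ : ∀ (x u : ℝ), volume (DD Y u ∩ Ico 0 R) = 0 →
      (∫ y in Ioo (x-1) (x+1), Real.sign (Y y u)) = -2 * gg x := by
    intro x u hnull
    have hDnull : volume (DD Y u) = 0 := null_of_periodic _ R hRpos (hDper u) hnull
    have hae : (fun y => Real.sign (Y y u)) =ᵐ[volume.restrict (Ioo (x-1) (x+1))]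
        (fun y => Real.sign (gg y)) := by
      apply ae_restrict_of_ae
      have hsub : {y : ℝ | ¬ Real.sign (Y y u) = Real.sign (gg y)} ⊆
          DD Y u ∪ {y : ℝ | gg y = 0} := by
        intro y hy
        by_cases hz : gg y = 0
        · exact Or.inr hz
        · exact Or.inl ⟨hz, hy⟩
      have : volume {y : ℝ | ¬ Real.sign (Y y u) = Real.sign (gg y)} = 0 :=
        measure_mono_null hsub (measure_union_null hDnull zg_null)
      exact this
    rw [integral_congr_ae hae]
    exact intB x
  -- the set A of good times
  set A : Set ℝ := {T | T ≤ 3/2 ∧ ∀ s, 0 ≤ s → s < T → volume (DD Y s ∩ Ico 0 R) = 0}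
    with hA
  have hA0 : (0:ℝ) ∈ A := ⟨by norm_num, fun s h1 h2 => absurd h2 (not_lt.2 h1)⟩
  have hAne : A.Nonempty := ⟨0, hA0⟩
  have hAbdd : BddAbove A := ⟨3/2, fun T hT => hT.1⟩
  set t₁ := sSup A with ht₁
  have ht₁0 : 0 ≤ t₁ := le_csSup hAbdd hA0
  have ht₁32 : t₁ ≤ 3/2 := csSup_le hAne (fun T hT => hT.1)
  have hC1 : ∀ s, 0 ≤ s → s < t₁ → volume (DD Y s ∩ Ico 0 R) = 0 := by
    intro s h0 hs
    obtain ⟨T, hT, hsT⟩ := exists_lt_of_lt_csSup hAne hs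
    exact hT.2 s h0 hsT
  -- solution formula up to t₁
  have hC2 : ∀ x t, 0 ≤ t → t ≤ t₁ → Y x t = (3 - 2*t) * gg x := by
    have hlt : ∀ x t, 0 ≤ t → t < t₁ → Y x t = (3 - 2*t) * gg x := by
      intro x t h0 ht
      have hderiv : ∀ s ∈ Icc (0:ℝ) t,
          HasDerivWithinAt (fun w => Y x w - (3 - 2*w) * gg x) ((0:ℝ)) (Icc 0 t) s := by
        intro s hs
        have hst₁ : s < t₁ := lt_of_le_of_lt hs.2 ht
        have hs32 : s < 3/2 := lt_of_lt_of_le hst₁ ht₁32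
        have h1 := hPDE x s ⟨hs.1, hs32⟩
        rw [hFEQ x s (hC1 s hs.1 hst₁)] at h1
        have h3 : HasDerivAt (fun w : ℝ => (3 - 2*w) * gg x) (-2 * gg x) s := by
          have h := ((hasDerivAt_const s (3:ℝ)).sub ((hasDerivAt_id s).const_mul 2)).mul_const (gg x)
          exact h.congr_deriv (by ring)
        have h4 := h1.sub h3
        rw [show -2 * gg x - -2 * gg x = 0 by ring] at h4
        exact h4.hasDerivWithinAt
      have hlip := Convex.norm_image_sub_le_of_norm_hasDerivWithin_le (C := 0) hderiv
        (fun s _ => by simp) (convex_Icc 0 t) (left_mem_Icc.2 h0) (right_mem_Icc.2 h0)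
      rw [show Y x 0 - (3 - 2*0) * gg x = 0 by rw [hY0 x]; ring] at hlip
      simp only [sub_zero, zero_mul] at hlip
      have := norm_le_zero_iff.1 (le_trans hlip (by norm_num))
      linarith [sub_eq_zero.1 this]
    intro x t h0 ht
    rcases lt_or_eq_of_le ht with hlt' | heq
    · exact hlt x t h0 hlt'
    rcases lt_or_eq_of_le h0 with hpos | hzero
    · -- t = t₁ > 0 : continuity
      have h1 : Filter.Tendsto (fun s => Y x s) (nhdsWithin t (Iio t)) (nhds (Y x t)) :=
        ((hcont x).tendsto t).mono_left nhdsWithin_le_nhds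
      have h2 : Filter.Tendsto (fun s => (3 - 2*s) * gg x) (nhdsWithin t (Iio t))
          (nhds ((3 - 2*t) * gg x)) := by
        apply Filter.Tendsto.mono_left _ nhdsWithin_le_nhds
        exact (Continuous.tendsto (by fun_prop) t)
      have heqf : (fun s => Y x s) =ᶠ[nhdsWithin t (Iio t)] (fun s => (3 - 2*s) * gg x) := by
        filter_upwards [Ioo_mem_nhdsLT_of_mem (⟨hpos, le_refl t⟩ : t ∈ Ioc 0 t)] with s hs
        exact hlt x s (le_of_lt hs.1) (lt_of_lt_of_le hs.2 (le_of_eq heq))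
      exact tendsto_nhds_unique (Filter.Tendsto.congr' heqf h1) h2
    · rw [← hzero, hY0 x]; ring
  -- t₁ = 3/2
  have hC3 : t₁ = 3/2 := by
    by_contra hne
    have ht₁lt : t₁ < 3/2 := lt_of_le_of_ne ht₁32 hne
    set β := 3 - 2*t₁ with hβ
    have hβpos : 0 < β := by rw [hβ]; linarith
    set η := β / (100*(n:ℝ)) with hη
    have hηpos : 0 < η := by positivity
    have hη100 : η ≤ β/100 := by
      rw [hη]
      apply div_le_div_of_nonneg_left (le_of_lt hβpos) (by norm_num)
      · linarith
    have hηβ2 : η < β/2 := by linarith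
    set T' := t₁ + η with hT'
    have hT'lt : T' < 3/2 := by rw [hT', hβ] at *; linarith
    -- the quantity m and its sup M
    set m : ℝ → ℝ := fun u => (volume (DD Y u ∩ Ico 0 R)).toReal with hm
    have hvfin : ∀ u, volume (DD Y u ∩ Ico 0 R) ≠ ⊤ := by
      intro u
      have h1 : volume (DD Y u ∩ Ico 0 R) ≤ volume (Ico (0:ℝ) R) :=
        measure_mono inter_subset_right
      rw [Real.volume_Ico] at h1
      exact ne_top_of_le_ne_top ENNReal.ofReal_ne_top h1
    have hmub : ∀ u, m u ≤ R := by
      intro u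
      have h1 : volume (DD Y u ∩ Ico 0 R) ≤ volume (Ico (0:ℝ) R) :=
        measure_mono inter_subset_right
      rw [Real.volume_Ico] at h1
      have := ENNReal.toReal_mono ENNReal.ofReal_ne_top h1
      rw [ENNReal.toReal_ofReal (by linarith)] at this
      simpa [hm] using this
    have hmnn : ∀ u, 0 ≤ m u := fun u => ENNReal.toReal_nonneg
    set M := sSup (m '' Icc t₁ T') with hM
    have hMbdd : BddAbove (m '' Icc t₁ T') := ⟨R, by rintro _ ⟨u, _, rfl⟩; exact hmub u⟩
    have hMne : (m '' Icc t₁ T').Nonempty :=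
      ⟨m t₁, ⟨t₁, ⟨le_refl _, by linarith⟩, rfl⟩⟩
    have hMle : ∀ u, u ∈ Icc t₁ T' → m u ≤ M := fun u hu => le_csSup hMbdd ⟨u, hu, rfl⟩
    have hM0 : 0 ≤ M := le_trans (hmnn t₁) (hMle t₁ ⟨le_refl _, by linarith⟩)
    -- derivative bound (honest or junk)
    have hder : ∀ (x' : ℝ), ∀ u ∈ Icc t₁ T',
        |(∫ y in Ioo (x'-1) (x'+1), Real.sign (Y y u)) - (-2 * gg x')| ≤
          2*|gg x'| + 6*M := by
      intro x' u hu
      by_cases hint : IntegrableOn (fun y => Real.sign (Y y u)) (Ioo (x'-1) (x'+1)) volume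
      · -- honest case
        have hW : volume (Ioo (x'-1) (x'+1)) ≠ ⊤ := by
          rw [Real.volume_Ioo]; exact ENNReal.ofReal_ne_top
        have hSg : IntegrableOn SS (Ioo (x'-1) (x'+1)) volume :=
          SS_integrableOn _ hW
        have hBi : (∫ y in Ioo (x'-1) (x'+1), Real.sign (gg y)) = -2 * gg x' := intB x'
        have hsub : (∫ y in Ioo (x'-1) (x'+1), Real.sign (Y y u)) - (-2 * gg x')
            = ∫ y in Ioo (x'-1) (x'+1), (Real.sign (Y y u) - SS y) := by
          rw [integral_sub hint hSg, ← hBi]; rfl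
        rw [hsub]
        set E := toMeasurable volume ((DD Y u ∪ {y : ℝ | gg y = 0}) ∩ Ioo (x'-1) (x'+1))
          with hE
        have hEmeas : MeasurableSet E := measurableSet_toMeasurable _ _
        have hbound : ∀ᵐ y ∂(volume.restrict (Ioo (x'-1) (x'+1))),
            ‖Real.sign (Y y u) - SS y‖ ≤ E.indicator (fun _ => (2:ℝ)) y := by
          rw [ae_restrict_iff' measurableSet_Ioo]
          apply ae_of_all
          intro y hy
          by_cases hyE : y ∈ E
          · rw [Set.indicator_of_mem hyE]
            have h1 := sign_abs_le (Y y u)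
            have h2 := sign_abs_le (gg y)
            rw [Real.norm_eq_abs]
            calc |Real.sign (Y y u) - SS y| ≤ |Real.sign (Y y u)| + |SS y| := abs_sub _ _
            _ ≤ 2 := by unfold SS; linarith
          · rw [Set.indicator_of_notMem hyE]
            have hyn : y ∉ (DD Y u ∪ {y : ℝ | gg y = 0}) ∩ Ioo (x'-1) (x'+1) :=
              fun hc => hyE (subset_toMeasurable _ _ hc)
            have hyn2 : y ∉ DD Y u ∪ {y : ℝ | gg y = 0} := fun hc => hyn ⟨hc, hy⟩
            have hz : gg y ≠ 0 := fun hc => hyn2 (Or.inr hc)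
            have hD : y ∉ DD Y u := fun hc => hyn2 (Or.inl hc)
            have : Real.sign (Y y u) = Real.sign (gg y) := by
              by_contra hc
              exact hD ⟨hz, hc⟩
            unfold SS
            rw [this, sub_self, norm_zero]
        haveI : IsFiniteMeasure (volume.restrict (Ioo (x'-1) (x'+1))) :=
          ⟨by rw [Measure.restrict_apply_univ]; exact measure_Ioo_lt_top⟩
        have hIind : Integrable (E.indicator (fun _ => (2:ℝ)))
            (volume.restrict (Ioo (x'-1) (x'+1))) :=
          (integrable_const (2:ℝ)).indicator hEmeas
        have h5 := norm_integral_le_of_norm_le hIind hbound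
        rw [Real.norm_eq_abs] at h5
        refine le_trans h5 ?_
        have h6 : (∫ y in Ioo (x'-1) (x'+1), E.indicator (fun _ => (2:ℝ)) y)
            = (volume (Ioo (x'-1) (x'+1) ∩ E)).toReal * 2 := by
          rw [setIntegral_indicator hEmeas, setIntegral_const, smul_eq_mul, measureReal_def]
        rw [h6]
        -- volume estimate
        have h7 : volume (Ioo (x'-1) (x'+1) ∩ E) ≤ 3 * volume (DD Y u ∩ Ico 0 R) := by
          have h8 : volume E = volume ((DD Y u ∪ {y : ℝ | gg y = 0}) ∩ Ioo (x'-1) (x'+1)) :=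
            measure_toMeasurable _
          have h9 : (DD Y u ∪ {y : ℝ | gg y = 0}) ∩ Ioo (x'-1) (x'+1) ⊆
              (DD Y u ∩ Ioo (x'-1) (x'+1)) ∪ ({y : ℝ | gg y = 0}) := by
            rintro y ⟨hy1 | hy1, hy2⟩
            · exact Or.inl ⟨hy1, hy2⟩
            · exact Or.inr hy1
          have h10 : volume ((DD Y u ∪ {y : ℝ | gg y = 0}) ∩ Ioo (x'-1) (x'+1)) ≤
              volume (DD Y u ∩ Ioo (x'-1) (x'+1)) := by
            refine le_trans (measure_mono h9) (le_trans (measure_union_le _ _) ?_)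
            rw [zg_null, add_zero]
          have h11 : volume (DD Y u ∩ Ioo (x'-1) (x'+1)) ≤ 3 * volume (DD Y u ∩ Ico 0 R) := by
            have := cover3 (DD Y u) R (x'-1) hR1 (hDper u)
            rw [show (x'-1) + 2 = x'+1 by ring] at this
            exact this
          calc volume (Ioo (x'-1) (x'+1) ∩ E) ≤ volume E := measure_mono inter_subset_right
          _ = _ := h8
          _ ≤ _ := h10
          _ ≤ _ := h11
        have h12 : (volume (Ioo (x'-1) (x'+1) ∩ E)).toReal ≤ 3 * m u := by
          have hfin3 : (3:ENNReal) * volume (DD Y u ∩ Ico 0 R) ≠ ⊤ :=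
            ENNReal.mul_ne_top (by norm_num) (hvfin u)
          have := ENNReal.toReal_mono hfin3 h7
          rwa [ENNReal.toReal_mul, show ((3:ENNReal)).toReal = 3 by norm_num] at this
        have h13 : m u ≤ M := hMle u hu
        nlinarith [abs_nonneg (gg x')]
      · -- junk case
        rw [integral_undef hint]
        rw [zero_sub, abs_neg, abs_mul]
        rw [show |(-2:ℝ)| = 2 by norm_num]
        linarith
    -- the crossing estimate
    have hcross : ∀ s, s ∈ Ioc t₁ T' → ∀ x', x' ∈ DD Y s → |gg x'| ≤ 12*M*η/β := by
      intro s hs x' hx'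
      simp only [DD, mem_setOf_eq] at hx'
      obtain ⟨hgne, hsig⟩ := hx'
      have hs32 : s < 3/2 := lt_of_le_of_lt hs.2 hT'lt
      have hY₁ : Y x' t₁ = (3 - 2*t₁) * gg x' := hC2 x' t₁ ht₁0 le_rfl
      have hfd : ∀ w ∈ Icc t₁ s,
          HasDerivWithinAt (fun w => Y x' w - (3 - 2*w) * gg x')
            ((∫ y in Ioo (x'-1) (x'+1), Real.sign (Y y w)) - (-2 * gg x')) (Icc t₁ s) w := by
        intro w hw
        have hw32 : w < 3/2 := lt_of_le_of_lt hw.2 hs32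
        have h1 := hPDE x' w ⟨le_trans ht₁0 hw.1, hw32⟩
        have h3 : HasDerivAt (fun w : ℝ => (3 - 2*w) * gg x') (-2 * gg x') w := by
          have h := ((hasDerivAt_const w (3:ℝ)).sub ((hasDerivAt_id w).const_mul 2)).mul_const (gg x')
          exact h.congr_deriv (by ring)
        exact (h1.sub h3).hasDerivWithinAt
      have hbd : ∀ w ∈ Icc t₁ s,
          ‖(∫ y in Ioo (x'-1) (x'+1), Real.sign (Y y w)) - (-2 * gg x')‖ ≤
            2*|gg x'| + 6*M := by
        intro w hw
        rw [Real.norm_eq_abs]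
        exact hder x' w ⟨hw.1, le_trans hw.2 hs.2⟩
      have hlip := Convex.norm_image_sub_le_of_norm_hasDerivWithin_le hfd hbd
        (convex_Icc t₁ s) (left_mem_Icc.2 (le_of_lt hs.1)) (right_mem_Icc.2 (le_of_lt hs.1))
      rw [show Y x' t₁ - (3 - 2*t₁) * gg x' = 0 by rw [hY₁]; ring, sub_zero,
        Real.norm_eq_abs, Real.norm_eq_abs] at hlip
      rw [abs_of_pos (by linarith [hs.1] : (0:ℝ) < s - t₁)] at hlip
      -- lower bound from sign deviation
      have hlow : (3 - 2*s) * |gg x'| ≤ |Y x' s - (3 - 2*s) * gg x'| := by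
        rcases lt_or_gt_of_ne hgne with hneg | hpos
        · have hY0' : 0 ≤ Y x' s := by
            by_contra hc
            push_neg at hc
            exact hsig (by rw [Real.sign_of_neg hc, Real.sign_of_neg hneg])
          have h1 : (3 - 2*s) * |gg x'| ≤ Y x' s - (3 - 2*s) * gg x' := by
            rw [abs_of_neg hneg]; nlinarith
          exact le_trans h1 (le_abs_self _)
        · have hY0' : Y x' s ≤ 0 := by
            by_contra hc
            push_neg at hc
            exact hsig (by rw [Real.sign_of_pos hc, Real.sign_of_pos hpos])
          have h1 : (3 - 2*s) * |gg x'| ≤ -(Y x' s - (3 - 2*s) * gg x') := by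
            rw [abs_of_pos hpos]; nlinarith
          exact le_trans h1 (neg_le_abs _)
      -- combine
      have hkey : (3 - 2*s) * |gg x'| ≤ (2*|gg x'| + 6*M) * (s - t₁) := le_trans hlow hlip
      have hd1 : s - t₁ ≤ η := by rw [hT'] at hs; linarith [hs.2]
      have hd0 : 0 < s - t₁ := by linarith [hs.1]
      have ha0 : 0 ≤ |gg x'| := abs_nonneg _
      have hβs : 3 - 2*s = β - 2*(s - t₁) := by rw [hβ]; ring
      rw [hβs] at hkey
      rw [le_div_iff₀ hβpos]
      nlinarith [mul_le_mul_of_nonneg_left hd1 ha0, mul_le_mul_of_nonneg_left hd1 hM0,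
        mul_le_mul_of_nonneg_left hη100 ha0, mul_nonneg hM0 (le_of_lt hηpos)]
    -- the zero-neighborhood estimate:  m s ≤ 0.48 M  on (t₁, T']
    set ρ := 12*M*η/β with hρ
    have hρ0 : 0 ≤ ρ := by positivity
    have hms : ∀ s, s ∈ Ioc t₁ T' → m s ≤ 48/100 * M := by
      intro s hs
      have hsubz : DD Y s ∩ Ico 0 R ⊆
          ⋃ j ∈ Finset.range (2*n), Icc (1/3 + 2*(j:ℝ)/3 - ρ) (1/3 + 2*(j:ℝ)/3 + ρ) := by
        rintro x' ⟨hx'D, hx'I⟩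
        obtain ⟨j, hj, hmem⟩ := gg_small_loc R n hRn hx'I.1 hx'I.2 (hcross s hs x' hx'D)
        exact mem_biUnion (Finset.mem_range.2 hj) hmem
      have h1 : volume (DD Y s ∩ Ico 0 R) ≤
          ∑ j ∈ Finset.range (2*n), volume (Icc (1/3 + 2*(j:ℝ)/3 - ρ) (1/3 + 2*(j:ℝ)/3 + ρ)) :=
        le_trans (measure_mono hsubz) (measure_biUnion_finset_le _ _)
      have h2 : ∀ j ∈ Finset.range (2*n),
          volume (Icc (1/3 + 2*(j:ℝ)/3 - ρ) (1/3 + 2*(j:ℝ)/3 + ρ)) = ENNReal.ofReal (2*ρ) := by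
        intro j _
        rw [Real.volume_Icc]
        congr 1
        ring
      rw [Finset.sum_congr rfl h2, Finset.sum_const, Finset.card_range, nsmul_eq_mul,
        ← ENNReal.ofReal_natCast (2*n), ← ENNReal.ofReal_mul (by positivity)] at h1
      have h4 : m s ≤ ((2*n : ℕ) : ℝ) * (2*ρ) := by
        have := ENNReal.toReal_mono ENNReal.ofReal_ne_top h1
        rwa [ENNReal.toReal_ofReal (by positivity)] at this
      have h5 : ((2*n : ℕ) : ℝ) * (2*ρ) = 48/100 * M := by
        push_cast
        rw [hρ, hη]
        have hnne : (n:ℝ) ≠ 0 := by linarith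
        field_simp
        ring
      linarith [h4, h5.le, h5.ge]
    -- M = 0
    have hDt₁ : DD Y t₁ ∩ Ico 0 R = ∅ := by
      apply eq_empty_iff_forall_notMem.2
      rintro y ⟨⟨hne, hsig⟩, _⟩
      have hYt₁ : Y y t₁ = β * gg y := by rw [hC2 y t₁ ht₁0 le_rfl, hβ]
      rcases lt_or_gt_of_ne hne with hneg | hpos
      · exact hsig (by rw [hYt₁, Real.sign_of_neg (by nlinarith), Real.sign_of_neg hneg])
      · exact hsig (by rw [hYt₁, Real.sign_of_pos (by nlinarith), Real.sign_of_pos hpos])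
    have hmt₁ : m t₁ = 0 := by rw [hm]; simp [hDt₁]
    have hM0' : M = 0 := by
      have hle : M ≤ 48/100 * M := by
        apply csSup_le hMne
        rintro _ ⟨u, hu, rfl⟩
        rcases eq_or_lt_of_le hu.1 with heq | hlt'
        · rw [← heq, hmt₁]; linarith
        · exact hms u ⟨hlt', hu.2⟩
      linarith
    -- T' ∈ A, contradiction
    have hT'A : T' ∈ A := by
      refine ⟨le_of_lt hT'lt, fun s h0s hsT' => ?_⟩
      rcases lt_trichotomy s t₁ with h | h | h
      · exact hC1 s h0s h
      · rw [h]; rw [hDt₁]; simp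
      · have h1 : m s ≤ 0 := by
          have := hms s ⟨h, le_of_lt hsT'⟩
          linarith [hM0']
        have h2 : m s = 0 := le_antisymm h1 (hmnn s)
        rcases (ENNReal.toReal_eq_zero_iff _).1 h2 with h3 | h3
        · exact h3
        · exact absurd h3 (hvfin s)
    have := le_csSup hAbdd hT'A
    rw [hT'] at this
    linarith
  -- final integral identity for all times in [0, 3/2)
  have hfinal : ∀ x t, 0 ≤ t → t < 3/2 →
      (∫ y in Ioo (x-1) (x+1), Real.sign (Y y t)) = -2 * gg x := by
    intro x t h0 ht
    exact hFEQ x t (hC1 t h0 (by rw [hC3]; exact ht))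
  refine ⟨?_, ?_, ?_, ?_⟩
  · -- first branch derivative
    intro k hk x hx1 hx2 t ht
    have h1 := hPDE x t ht
    rw [hfinal x t ht.1 ht.2] at h1
    have hg : gg x = x - 4*(k:ℝ)/3 - 1/3 := gg_br1 k x hx1 hx2
    rw [show (2:ℝ)/3 - 2*(x - 4*(k:ℝ)/3) = -2 * gg x by rw [hg]; ring]
    exact h1
  · -- second branch derivative
    intro k hk x hx1 hx2 t ht
    have h1 := hPDE x t ht
    rw [hfinal x t ht.1 ht.2] at h1
    have hg : gg x = 1 - (x - 4*(k:ℝ)/3) := gg_br2 k x hx1 hx2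
    rw [show (-2:ℝ)/3 + 2*(x - 4*(k:ℝ)/3 - 2/3) = -2 * gg x by rw [hg]; ring]
    exact h1
  · -- value at time 3/2
    intro x
    have := hC2 x (3/2) (by norm_num) (by rw [hC3])
    rw [this]; ring
  · -- non-uniqueness branches
    intro σ hσ x t ht
    have h2 : (∫ _ in Ioo (x-1) (x+1), Real.sign (σ * (2 * (t - 3/2)))) =
        2 * (Real.sign (σ * (2 * (t - 3/2)))) := by
      rw [setIntegral_const, measureReal_def, Real.volume_Ioo, smul_eq_mul]
      congr 1
      rw [show x + 1 - (x - 1) = 2 by ring]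
      norm_num
    rw [h2]
    have hD : HasDerivAt (fun s : ℝ => σ * (2 * (s - 3/2))) (σ * 2) t := by
      have h := (((hasDerivAt_id t).sub_const (3/2)).const_mul (2:ℝ)).const_mul σ
      exact h.congr_deriv (by ring)
    rcases hσ with rfl | rfl
    · rw [Real.sign_of_pos (by linarith)]
      convert hD using 1
      ring
    · rw [Real.sign_of_neg (by nlinarith)]
      convert hD using 1
      ring
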